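/- Let $B$ be a symmetric bilinear form on a finite-dimensional real vector space $V$, let $W \subseteq V$ be a vector subspace, and let $W^{\perp} := \{v \in V \mid B(v, w) = 0 \text{ for all } w \in W\}$ denote its $B$-orthogonal. Then $\mathrm{ind}(B) + \dim(\ker(B) \cap W) = \mathrm{ind}(B|_{W \times W}) + \mathrm{ind}(B|_{W^{\perp} \times W^{\perp}}) + \dim(W \cap W^{\perp})$. -/

import Mathlib

open Module

/-- The index of a bilinear form `B` on a real vector space: the maximal dimension of a
subspace on which `B` is negative definite. -/
noncomputable def bilinIndex {V : Type*} [AddCommGroup V] [Module ℝ V]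
    (B : V →ₗ[ℝ] V →ₗ[ℝ] ℝ) : ℕ :=
  sSup {n : ℕ | ∃ W : Submodule ℝ V, Module.finrank ℝ W = n ∧ ∀ v ∈ W, v ≠ 0 → B v v < 0}

/-- The `B`-orthogonal of a subspace `W`: all vectors `v` with `B v w = 0` for every
`w ∈ W`. -/
def bilinOrthogonal {V : Type*} [AddCommGroup V] [Module ℝ V]
    (B : V →ₗ[ℝ] V →ₗ[ℝ] ℝ) (W : Submodule ℝ V) : Submodule ℝ V where
  carrier := {v : V | ∀ w ∈ W, B v w = 0}
  add_mem' := by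
    intro a b ha hb w hw
    simp [ha w hw, hb w hw]
  zero_mem' := by
    intro w hw
    simp
  smul_mem' := by
    intro c a ha w hw
    simp [ha w hw]

section Basics

variable {V : Type*} [AddCommGroup V] [Module ℝ V]

/-- Negative definiteness of `B` on a submodule. -/
def BNegDef (B : V →ₗ[ℝ] V →ₗ[ℝ] ℝ) (N : Submodule ℝ V) : Prop :=
  ∀ v ∈ N, v ≠ 0 → B v v < 0

lemma mem_bilinOrthogonal_iff {B : V →ₗ[ℝ] V →ₗ[ℝ] ℝ} {W : Submodule ℝ V} {v : V} :
    v ∈ bilinOrthogonal B W ↔ ∀ w ∈ W, B v w = 0 := Iff.rfl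

variable [FiniteDimensional ℝ V] (B : V →ₗ[ℝ] V →ₗ[ℝ] ℝ)

lemma bilinIndex_bddAbove :
    BddAbove {n : ℕ | ∃ W : Submodule ℝ V, Module.finrank ℝ W = n ∧ ∀ v ∈ W, v ≠ 0 → B v v < 0} := by
  refine ⟨finrank ℝ V, ?_⟩
  rintro n ⟨N, rfl, -⟩
  exact N.finrank_le

lemma bilinIndex_spec :
    ∃ N : Submodule ℝ V, finrank ℝ N = bilinIndex B ∧ BNegDef B N := by
  have h := Nat.sSup_mem (s := {n : ℕ | ∃ W : Submodule ℝ V,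
      Module.finrank ℝ W = n ∧ ∀ v ∈ W, v ≠ 0 → B v v < 0})
    ⟨0, ⊥, finrank_bot ℝ V, by simp +contextual [Submodule.mem_bot]⟩
    (bilinIndex_bddAbove B)
  obtain ⟨N, hN, hneg⟩ := h
  exact ⟨N, hN, hneg⟩

lemma le_bilinIndex {N : Submodule ℝ V} (h : BNegDef B N) : finrank ℝ N ≤ bilinIndex B :=
  le_csSup (bilinIndex_bddAbove B) ⟨N, rfl, h⟩

end Basics

section P2
open Module
variable {V : Type*} [AddCommGroup V] [Module ℝ V]
variable (B : V →ₗ[ℝ] V →ₗ[ℝ] ℝ) (hB : ∀ v w, B v w = B w v)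

include hB

lemma isRefl_of_symm : LinearMap.IsRefl B := fun x y h => by rw [hB]; exact h

lemma bilinOrthogonal_eq (W : Submodule ℝ V) :
    bilinOrthogonal B W = LinearMap.BilinForm.orthogonal B W := by
  ext v
  constructor
  · intro h n hn
    show B n v = 0
    rw [← hB]
    exact h n hn
  · intro h w hw
    rw [hB]; exact h w hw

omit hB in
lemma bilinOrthogonal_top_eq_ker : bilinOrthogonal B ⊤ = LinearMap.ker B := by
  ext v
  constructor
  · intro h
    rw [LinearMap.mem_ker]
    ext w
    exact h w trivial
  · intro h w _
    have : B v = 0 := h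
    simp [this]

lemma orth_dim (W : Submodule ℝ V) [FiniteDimensional ℝ V] :
    finrank ℝ W + finrank ℝ (bilinOrthogonal B W) =
      finrank ℝ V + finrank ℝ (W ⊓ LinearMap.ker B : Submodule ℝ V) := by
  have h := LinearMap.BilinForm.finrank_add_finrank_orthogonal (isRefl_of_symm B hB) W
  rw [← bilinOrthogonal_eq B hB, ← bilinOrthogonal_eq B hB ⊤,
    bilinOrthogonal_top_eq_ker (B := B)] at h
  exact h

omit hB in
lemma ker_le_bilinOrthogonal (W : Submodule ℝ V) : LinearMap.ker B ≤ bilinOrthogonal B W := by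
  intro v hv w _
  rw [LinearMap.mem_ker] at hv
  simp [hv]

omit hB in
lemma ker_domRestrict₁₂ (W : Submodule ℝ V) :
    LinearMap.ker (LinearMap.domRestrict₁₂ B W W) =
      (W ⊓ bilinOrthogonal B W).comap W.subtype := by
  ext x
  simp only [LinearMap.mem_ker, Submodule.mem_comap, Submodule.mem_inf, Submodule.coe_subtype]
  constructor
  · intro h
    refine ⟨x.2, fun w hw => ?_⟩
    have := congrArg (fun f => f ⟨w, hw⟩) h
    simpa [LinearMap.domRestrict₁₂_apply] using this
  · rintro ⟨-, h⟩
    ext y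
    simpa [LinearMap.domRestrict₁₂_apply] using h y y.2

omit hB in
lemma finrank_ker_domRestrict₁₂ (W : Submodule ℝ V) [FiniteDimensional ℝ V] :
    finrank ℝ (LinearMap.ker (LinearMap.domRestrict₁₂ B W W)) =
      finrank ℝ (W ⊓ bilinOrthogonal B W : Submodule ℝ V) := by
  rw [ker_domRestrict₁₂ B]
  exact (Submodule.comapSubtypeEquivOfLe inf_le_left).finrank_eq

end P2

section Syl
open Module Finset
variable {V : Type*} [AddCommGroup V] [Module ℝ V]
variable (B : V →ₗ[ℝ] V →ₗ[ℝ] ℝ) {n : ℕ} (v : Basis (Fin n) ℝ V)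
  (ho : ∀ i j, i ≠ j → B (v i) (v j) = 0)

include ho

/-- value of `B x (v i)` through coordinates. -/
lemma bilin_apply_basis (x : V) (i : Fin n) :
    B x (v i) = (v.repr x i) * B (v i) (v i) := by
  conv_lhs => rw [← v.linearCombination_repr x, Finsupp.linearCombination_apply, Finsupp.sum]
  rw [map_sum, LinearMap.sum_apply]
  rw [Finset.sum_eq_single i (fun j _ hj => by
      rw [map_smul, LinearMap.smul_apply, ho j i hj, smul_zero])
    (fun hi => by simp [Finsupp.notMem_support_iff.mp hi])]
  rw [map_smul, LinearMap.smul_apply, smul_eq_mul]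

lemma bilin_apply_self (x : V) :
    B x x = ∑ i ∈ (v.repr x).support, (v.repr x i) * (v.repr x i) * B (v i) (v i) := by
  nth_rewrite 2 [← v.linearCombination_repr x]
  rw [Finsupp.linearCombination_apply, Finsupp.sum, map_sum]
  refine Finset.sum_congr rfl fun i _ => ?_
  rw [map_smul, smul_eq_mul, bilin_apply_basis B v ho x i]
  ring

omit ho in
lemma span_finrank_card (S : Finset (Fin n)) :
    finrank ℝ (Submodule.span ℝ (v '' ↑S)) = S.card := by
  have li : LinearIndependent ℝ (fun i : ↥(↑S : Set (Fin n)) => v i) :=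
    v.linearIndependent.comp _ Subtype.val_injective
  rw [Set.image_eq_range, finrank_span_eq_card li]
  simp

lemma span_negdef (S : Finset (Fin n)) (hS : ∀ i ∈ S, B (v i) (v i) < 0) :
    BNegDef B (Submodule.span ℝ (v '' ↑S)) := by
  intro x hx hx0
  have hsupp : ↑(v.repr x).support ⊆ (↑S : Set (Fin n)) := v.mem_span_image.mp hx
  have hne : (v.repr x).support.Nonempty := by
    rw [Finsupp.support_nonempty_iff]
    intro h
    exact hx0 (by simpa [h] using (v.linearCombination_repr x).symm)
  rw [bilin_apply_self B v ho x]
  calc ∑ i ∈ (v.repr x).support, (v.repr x i) * (v.repr x i) * B (v i) (v i)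
      < ∑ _i ∈ (v.repr x).support, (0 : ℝ) := by
        refine Finset.sum_lt_sum_of_nonempty hne fun i hi => ?_
        have hv0 : v.repr x i ≠ 0 := Finsupp.mem_support_iff.mp hi
        have : B (v i) (v i) < 0 := hS i (hsupp hi)
        have h2 : 0 < v.repr x i * v.repr x i := mul_self_pos.mpr hv0
        exact mul_neg_of_pos_of_neg h2 this
    _ = 0 := Finset.sum_const_zero

lemma span_nonneg_def (S : Finset (Fin n)) (hS : ∀ i ∈ S, 0 ≤ B (v i) (v i)) :
    ∀ x ∈ Submodule.span ℝ (v '' ↑S), 0 ≤ B x x := by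
  intro x hx
  have hsupp : ↑(v.repr x).support ⊆ (↑S : Set (Fin n)) := v.mem_span_image.mp hx
  rw [bilin_apply_self B v ho x]
  refine Finset.sum_nonneg fun i hi => ?_
  exact mul_nonneg (mul_self_nonneg _) (hS i (hsupp hi))

lemma bilinIndex_eq_card [FiniteDimensional ℝ V] :
    bilinIndex B = (Finset.univ.filter fun i => B (v i) (v i) < 0).card := by
  set Neg := Finset.univ.filter fun i => B (v i) (v i) < 0 with hNeg
  set T := Finset.univ.filter fun i => ¬ B (v i) (v i) < 0 with hT
  have hcard : Neg.card + T.card = n := by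
    rw [hNeg, hT, Finset.card_filter_add_card_filter_not, Finset.card_univ,
      Fintype.card_fin]
  have hn : n = finrank ℝ V := by rw [finrank_eq_card_basis v, Fintype.card_fin]
  apply le_antisymm
  · obtain ⟨N, hfin, hneg⟩ := bilinIndex_spec B
    have hM : finrank ℝ (Submodule.span ℝ (v '' ↑T)) = T.card := span_finrank_card v T
    have hbot : N ⊓ Submodule.span ℝ (v '' ↑T) = ⊥ := by
      rw [Submodule.eq_bot_iff]
      intro x ⟨hx1, hx2⟩
      by_contra hx0
      have h1 := hneg x hx1 hx0
      have h2 := span_nonneg_def B v ho T (fun i hi => not_lt.mp (Finset.mem_filter.mp hi).2)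
        x hx2
      linarith
    have := Submodule.finrank_sup_add_finrank_inf_eq N (Submodule.span ℝ (v '' ↑T))
    rw [hbot, finrank_bot, hfin, hM] at this
    have hle : finrank ℝ ↥(N ⊔ Submodule.span ℝ (v '' ↑T)) ≤ finrank ℝ V :=
      Submodule.finrank_le _
    omega
  · have h1 : finrank ℝ (Submodule.span ℝ (v '' ↑Neg)) = Neg.card := span_finrank_card v Neg
    have h2 : BNegDef B (Submodule.span ℝ (v '' ↑Neg)) :=
      span_negdef B v ho Neg (fun i hi => (Finset.mem_filter.mp hi).2)
    calc Neg.card = finrank ℝ (Submodule.span ℝ (v '' ↑Neg)) := h1.symm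
      _ ≤ bilinIndex B := le_bilinIndex B h2

omit ho

lemma ker_eq_span_zero :
    (∀ i j, i ≠ j → B (v i) (v j) = 0) →
    LinearMap.ker B = Submodule.span ℝ (v '' ↑(Finset.univ.filter fun i => B (v i) (v i) = 0)) := by
  intro ho
  apply le_antisymm
  · intro x hx
    rw [LinearMap.mem_ker] at hx
    rw [v.mem_span_image]
    intro i hi
    simp only [Finset.coe_filter, Set.mem_setOf_eq, Finset.mem_univ, true_and]
    rw [Finset.mem_coe, Finsupp.mem_support_iff] at hi
    by_contra h0
    have := bilin_apply_basis B v ho x i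
    rw [hx, LinearMap.zero_apply] at this
    exact hi (by
      rcases mul_eq_zero.mp this.symm with h | h
      · exact h
      · exact absurd h h0)
  · rw [Submodule.span_le]
    rintro - ⟨i, hi, rfl⟩
    simp only [Finset.coe_filter, Set.mem_setOf_eq, Finset.mem_univ, true_and] at hi
    rw [SetLike.mem_coe, LinearMap.mem_ker]
    apply v.ext
    intro j
    rcases eq_or_ne i j with rfl | hij
    · simpa using hi
    · simpa using ho i j hij

lemma sylvester [FiniteDimensional ℝ V] (hB : ∀ x y, B x y = B y x) :
    bilinIndex B + bilinIndex (-B) + finrank ℝ (LinearMap.ker B) = finrank ℝ V := by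
  obtain ⟨v, hv⟩ := LinearMap.BilinForm.exists_orthogonal_basis
    (B := B) ⟨fun x y => hB x y⟩
  have ho : ∀ i j, i ≠ j → B (v i) (v j) = 0 := fun i j hij => hv hij
  have ho' : ∀ i j, i ≠ j → (-B) (v i) (v j) = 0 := by
    intro i j hij
    simp [ho i j hij]
  have h1 : bilinIndex B = (Finset.univ.filter fun i => B (v i) (v i) < 0).card :=
    bilinIndex_eq_card B v ho
  have h2 : bilinIndex (-B) = (Finset.univ.filter fun i => 0 < B (v i) (v i)).card := by
    rw [bilinIndex_eq_card (-B) v ho']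
    congr 1
    apply Finset.filter_congr
    intro i _
    simp
  have h3 : finrank ℝ (LinearMap.ker B) =
      (Finset.univ.filter fun i => B (v i) (v i) = 0).card := by
    rw [ker_eq_span_zero B v ho]
    exact span_finrank_card v _
  have hsplit : (Finset.univ.filter fun i => ¬ B (v i) (v i) < 0) =
      (Finset.univ.filter fun i => 0 < B (v i) (v i)) ∪
      (Finset.univ.filter fun i => B (v i) (v i) = 0) := by
    ext i
    simp only [Finset.mem_filter, Finset.mem_union, Finset.mem_univ, true_and, not_lt]
    constructor
    · intro h
      rcases h.lt_or_eq with h' | h'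
      · exact Or.inl h'
      · exact Or.inr h'.symm
    · rintro (h | h)
      · exact h.le
      · exact h.ge
  have hdisj : Disjoint (Finset.univ.filter fun i => 0 < B (v i) (v i))
      (Finset.univ.filter fun i => B (v i) (v i) = 0) := by
    rw [Finset.disjoint_filter]
    intro i _ h h'
    rw [h'] at h
    exact lt_irrefl 0 h
  have hcard := Finset.card_filter_add_card_filter_not
    (s := (Finset.univ : Finset (Fin (finrank ℝ V)))) (p := fun i => B (v i) (v i) < 0)
  rw [hsplit, Finset.card_union_of_disjoint hdisj, Finset.card_univ, Fintype.card_fin] at hcard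
  omega

end Syl

section P4
open Module
variable {V : Type*} [AddCommGroup V] [Module ℝ V]
variable [FiniteDimensional ℝ V] (B : V →ₗ[ℝ] V →ₗ[ℝ] ℝ) (hB : ∀ v w, B v w = B w v)

lemma negdef_nonpos {N : Submodule ℝ V} (h : BNegDef B N) {v : V} (hv : v ∈ N) : B v v ≤ 0 := by
  rcases eq_or_ne v 0 with rfl | h0
  · simp
  · exact (h v hv h0).le

include hB

lemma negdef_proj {U : Submodule ℝ V} (hU : BNegDef B U) (x : V) :
    ∃ u ∈ U, ∀ w ∈ U, B (x - u) w = 0 := by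
  let φ : ↥U →ₗ[ℝ] Module.Dual ℝ ↥U := LinearMap.domRestrict₁₂ B U U
  have hinj : Function.Injective φ := by
    rw [← LinearMap.ker_eq_bot]
    rw [Submodule.eq_bot_iff]
    intro u hu
    rw [LinearMap.mem_ker] at hu
    by_contra h0
    have h1 : (u : V) ≠ 0 := fun h => h0 (Subtype.ext h)
    have h2 : B u u < 0 := hU u u.2 h1
    have h3 : φ u u = B u u := rfl
    rw [hu] at h3
    simp at h3
    rw [← h3] at h2
    exact lt_irrefl 0 h2
  have hsurj : Function.Surjective φ :=
    (LinearMap.injective_iff_surjective_of_finrank_eq_finrank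
      (Subspace.dual_finrank_eq (K := ℝ) (V := ↥U)).symm).mp hinj
  obtain ⟨u, hu⟩ := hsurj ((B x).domRestrict U)
  refine ⟨u, u.2, fun w hw => ?_⟩
  have := congrArg (fun f => f ⟨w, hw⟩) hu
  simp only [φ, LinearMap.domRestrict₁₂_apply, LinearMap.domRestrict_apply] at this
  rw [map_sub, LinearMap.sub_apply, this, sub_self]

lemma exists_dual_family {D₀ : Submodule ℝ V} (hD₀ : D₀ ⊓ LinearMap.ker B = ⊥) :
    ∃ e : Fin (finrank ℝ D₀) → V, ∀ i j,
      B ((Module.finBasis ℝ D₀ i : V)) (e j) = if i = j then 1 else 0 := by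
  let ψ : V →ₗ[ℝ] Module.Dual ℝ ↥D₀ := (B.domRestrict D₀).flip
  have hker : LinearMap.ker ψ = bilinOrthogonal B D₀ := by
    ext v
    simp only [LinearMap.mem_ker, ψ]
    constructor
    · intro h w hw
      have := congrArg (fun f => f ⟨w, hw⟩) h
      simp only [LinearMap.flip_apply, LinearMap.domRestrict_apply, LinearMap.zero_apply] at this
      rw [hB]
      exact this
    · intro h
      ext ⟨w, hw⟩
      simp only [LinearMap.flip_apply, LinearMap.domRestrict_apply, LinearMap.zero_apply]
      rw [← hB]
      exact h w hw
  have hrange : LinearMap.range ψ = ⊤ := by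
    apply Submodule.eq_top_of_finrank_eq
    have h1 := LinearMap.finrank_range_add_finrank_ker ψ
    rw [hker] at h1
    have h2 := orth_dim B hB D₀
    rw [hD₀, finrank_bot] at h2
    rw [Subspace.dual_finrank_eq]
    omega
  have hex : ∀ j : Fin (finrank ℝ D₀), ∃ x : V, ψ x = (Module.finBasis ℝ D₀).coord j := by
    intro j
    exact LinearMap.range_eq_top.mp hrange _
  choose e he using hex
  refine ⟨e, fun i j => ?_⟩
  have := congrArg (fun f => f (Module.finBasis ℝ D₀ i)) (he j)
  simp only [ψ, LinearMap.flip_apply, LinearMap.domRestrict_apply, Basis.coord_apply,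
    Basis.repr_self_apply] at this
  exact this

lemma ge_aux :
    ∀ (m : ℕ) (U : Submodule ℝ V), BNegDef B U → ∀ (d e : Fin m → V),
      (∀ i j, B (d i) (d j) = 0) →
      (∀ i, ∀ u ∈ U, B (d i) u = 0) →
      (∀ i j, B (d i) (e j) = if i = j then 1 else 0) →
      ∃ U' : Submodule ℝ V, BNegDef B U' ∧ finrank ℝ U' = finrank ℝ U + m := by
  intro m
  induction m with
  | zero => exact fun U hU d e _ _ _ => ⟨U, hU, by simp⟩
  | succ m ih =>
    intro U hU d e hdd hdU hde
    obtain ⟨u₀, hu₀U, hu₀⟩ := negdef_proj B hB hU (e 0)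
    set e' : V := e 0 - u₀ with he'
    have he'U : ∀ w ∈ U, B e' w = 0 := hu₀
    have hde' : ∀ i, B (d i) e' = if i = 0 then 1 else 0 := by
      intro i
      rw [he', map_sub, hdU i u₀ hu₀U, sub_zero, hde i 0]
    set t : ℝ := (B e' e' + 1) / 2 with ht
    set f : V := t • d 0 - e' with hf
    have hBdf : ∀ i, B (d i) f = -(if i = 0 then 1 else 0) := by
      intro i
      rw [hf, map_sub, map_smul, hdd i 0, smul_zero, zero_sub, hde' i]
    have hBfU : ∀ w ∈ U, B f w = 0 := by
      intro w hw
      rw [hf, map_sub, LinearMap.sub_apply, map_smul, LinearMap.smul_apply,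
        hdU 0 w hw, smul_zero, he'U w hw, sub_zero]
    have hBe'd : B e' (d 0) = 1 := by
      rw [hB]
      simpa using hde' 0
    have hBe'f : B e' f = t - B e' e' := by
      rw [hf, map_sub, map_smul, smul_eq_mul, hBe'd, mul_one]
    have h1 : ∀ x, B f x = t * B (d 0) x - B e' x := by
      intro x
      rw [hf, map_sub, LinearMap.sub_apply, map_smul, LinearMap.smul_apply, smul_eq_mul]
    have hBff : B f f = -1 := by
      rw [h1 f, hBdf 0, hBe'f, if_pos rfl, ht]
      ring
    have hfU : f ∉ U := by
      intro h
      have h1 := hdU 0 f h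
      have h2 := hBdf 0
      rw [if_pos rfl, h1] at h2
      norm_num at h2
    have hf0 : f ≠ 0 := by
      intro h
      rw [h] at hBff
      norm_num at hBff
    have hU' : BNegDef B (U ⊔ ℝ ∙ f) := by
      intro x hx hx0
      rw [Submodule.mem_sup] at hx
      obtain ⟨u, hu, s, hs, rfl⟩ := hx
      obtain ⟨a, rfl⟩ := Submodule.mem_span_singleton.mp hs
      have hfu : B f u = 0 := hBfU u hu
      have huf : B u f = 0 := by rw [hB]; exact hfu
      have hval : B (u + a • f) (u + a • f) = B u u - a * a := by
        simp only [map_add, LinearMap.add_apply, map_smul, LinearMap.smul_apply, smul_eq_mul,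
          hfu, huf, hBff]
        ring
      rw [hval]
      rcases eq_or_ne a 0 with rfl | ha
      · have hu0 : u ≠ 0 := by simpa using hx0
        have := hU u hu hu0
        nlinarith
      · have h1 : B u u ≤ 0 := negdef_nonpos B hU hu
        nlinarith [mul_self_pos.mpr ha]
    have hinf : U ⊓ (ℝ ∙ f) = ⊥ := by
      rw [Submodule.eq_bot_iff]
      rintro x ⟨hxU, hxf⟩
      obtain ⟨a, rfl⟩ := Submodule.mem_span_singleton.mp hxf
      rcases eq_or_ne a 0 with rfl | ha
      · simp
      · exfalso
        apply hfU
        have : a⁻¹ • (a • f) ∈ U := U.smul_mem a⁻¹ hxU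
        rwa [smul_smul, inv_mul_cancel₀ ha, one_smul] at this
    have hrank : finrank ℝ ↥(U ⊔ ℝ ∙ f) = finrank ℝ U + 1 := by
      have h := Submodule.finrank_sup_add_finrank_inf_eq U (ℝ ∙ f)
      rw [hinf, finrank_bot, finrank_span_singleton hf0] at h
      omega
    obtain ⟨U'', hU'', hr⟩ := ih (U ⊔ ℝ ∙ f) hU' (fun i => d i.succ) (fun i => e i.succ)
      (fun i j => hdd _ _)
      (by
        intro i u hu
        rw [Submodule.mem_sup] at hu
        obtain ⟨w, hw, s, hs, rfl⟩ := hu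
        obtain ⟨a, rfl⟩ := Submodule.mem_span_singleton.mp hs
        have h1 := hdU i.succ w hw
        have h2 := hBdf i.succ
        rw [if_neg (Fin.succ_ne_zero i)] at h2
        simp [map_add, map_smul, h1, h2])
      (by
        intro i j
        rw [hde]
        simp [Fin.succ_inj])
    exact ⟨U'', hU'', by rw [hr, hrank]; omega⟩

lemma ge_ineq (W : Submodule ℝ V) :
    bilinIndex (LinearMap.domRestrict₁₂ B W W) +
      bilinIndex (LinearMap.domRestrict₁₂ B (bilinOrthogonal B W) (bilinOrthogonal B W)) +
      finrank ℝ (W ⊓ bilinOrthogonal B W : Submodule ℝ V) ≤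
    bilinIndex B + finrank ℝ (LinearMap.ker B ⊓ W : Submodule ℝ V) := by
  set P := bilinOrthogonal B W with hP
  -- maximal negative subspaces inside W and P
  obtain ⟨N', hN'rank, hN'neg⟩ := bilinIndex_spec (LinearMap.domRestrict₁₂ B W W)
  obtain ⟨M', hM'rank, hM'neg⟩ := bilinIndex_spec (LinearMap.domRestrict₁₂ B P P)
  set N : Submodule ℝ V := N'.map W.subtype with hN
  set M : Submodule ℝ V := M'.map P.subtype with hM
  have hNW : N ≤ W := Submodule.map_subtype_le W N'
  have hMP : M ≤ P := Submodule.map_subtype_le P M'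
  have hNrank : finrank ℝ N = bilinIndex (LinearMap.domRestrict₁₂ B W W) := by
    rw [hN, Submodule.finrank_map_subtype_eq, hN'rank]
  have hMrank : finrank ℝ M = bilinIndex (LinearMap.domRestrict₁₂ B P P) := by
    rw [hM, Submodule.finrank_map_subtype_eq, hM'rank]
  have hNneg : BNegDef B N := by
    rintro v ⟨x, hx, rfl⟩ h0
    have : x ≠ 0 := fun h => h0 (by rw [h]; rfl)
    exact hN'neg x hx this
  have hMneg : BNegDef B M := by
    rintro v ⟨x, hx, rfl⟩ h0
    have : x ≠ 0 := fun h => h0 (by rw [h]; rfl)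
    exact hM'neg x hx this
  have hcross : ∀ x ∈ N, ∀ y ∈ M, B x y = 0 := by
    intro x hx y hy
    rw [hB]
    exact hMP hy x (hNW hx)
  have hU : BNegDef B (N ⊔ M) := by
    intro v hv h0
    rw [Submodule.mem_sup] at hv
    obtain ⟨x, hx, y, hy, rfl⟩ := hv
    have hxy : B x y = 0 := hcross x hx y hy
    have hyx : B y x = 0 := by rw [hB]; exact hxy
    have hval : B (x + y) (x + y) = B x x + B y y := by
      simp only [map_add, LinearMap.add_apply, hxy, hyx]
      ring
    rw [hval]
    rcases eq_or_ne x 0 with rfl | hx0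
    · have hy0 : y ≠ 0 := by simpa using h0
      have := hMneg y hy hy0
      simpa using (by simpa using this : B y y < 0)
    · have h1 := hNneg x hx hx0
      have h2 := negdef_nonpos B hMneg hy
      linarith
  have hNM : N ⊓ M = ⊥ := by
    rw [Submodule.eq_bot_iff]
    rintro x ⟨hx1, hx2⟩
    by_contra h0
    have h1 := hNneg x hx1 h0
    have h2 := hcross x hx1 x hx2
    linarith
  have hUrank : finrank ℝ ↥(N ⊔ M) = finrank ℝ N + finrank ℝ M := by
    have h := Submodule.finrank_sup_add_finrank_inf_eq N M
    rw [hNM, finrank_bot] at h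
    omega
  -- complement of ker ∩ W inside W ⊓ P
  set D : Submodule ℝ V := W ⊓ P with hD
  set KW : Submodule ℝ V := LinearMap.ker B ⊓ W with hKW
  have hKWD : KW ≤ D := by
    rw [hKW, hD]
    exact le_inf inf_le_right (le_trans inf_le_left (ker_le_bilinOrthogonal B W))
  obtain ⟨q, hq⟩ := Submodule.exists_isCompl (KW.comap D.subtype)
  set D₀ : Submodule ℝ V := q.map D.subtype with hD₀
  have hD₀D : D₀ ≤ D := Submodule.map_subtype_le D q
  have hD₀rank : finrank ℝ D₀ + finrank ℝ KW = finrank ℝ D := by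
    have h1 := Submodule.finrank_add_eq_of_isCompl hq
    have h2 : finrank ℝ (KW.comap D.subtype) = finrank ℝ KW :=
      (Submodule.comapSubtypeEquivOfLe hKWD).finrank_eq
    have h3 : finrank ℝ D₀ = finrank ℝ q := by
      rw [hD₀, Submodule.finrank_map_subtype_eq]
    omega
  have hD₀ker : D₀ ⊓ LinearMap.ker B = ⊥ := by
    rw [Submodule.eq_bot_iff]
    rintro x ⟨hx1, hx2⟩
    obtain ⟨y, hy, rfl⟩ := hx1
    have hyW : (y : V) ∈ W := y.2.1
    have hyKW : y ∈ KW.comap D.subtype := by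
      rw [Submodule.mem_comap, hKW]
      exact ⟨hx2, hyW⟩
    have hy0 : y = 0 := (Submodule.disjoint_def.mp hq.disjoint) y hyKW hy
    rw [hy0]
    simp
  -- dual family for D₀
  obtain ⟨e, he⟩ := exists_dual_family B hB hD₀ker
  set db := Module.finBasis ℝ ↥D₀ with hdb
  set dv : Fin (finrank ℝ D₀) → V := fun i => (db i : V) with hdv
  have hdvD₀ : ∀ i, dv i ∈ D₀ := fun i => (db i).2
  have hdvW : ∀ i, dv i ∈ W := fun i => by
    have h := hD₀D (hdvD₀ i)
    rw [hD] at h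
    exact h.1
  have hdvP : ∀ i, dv i ∈ P := fun i => by
    have h := hD₀D (hdvD₀ i)
    rw [hD] at h
    exact h.2
  have hdd : ∀ i j, B (dv i) (dv j) = 0 := fun i j => (hdvP i) (dv j) (hdvW j)
  have hdU : ∀ i, ∀ u ∈ N ⊔ M, B (dv i) u = 0 := by
    intro i u hu
    rw [Submodule.mem_sup] at hu
    obtain ⟨a, ha, b, hb, rfl⟩ := hu
    have h1 : B (dv i) a = 0 := (hdvP i) a (hNW ha)
    have h2 : B (dv i) b = 0 := by
      rw [hB]
      exact (hMP hb) (dv i) (hdvW i)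
    rw [map_add, h1, h2, add_zero]
  obtain ⟨U'', hU''neg, hU''rank⟩ := ge_aux B hB (finrank ℝ D₀) (N ⊔ M) hU dv e hdd hdU he
  have hle := le_bilinIndex B hU''neg
  rw [hU''rank, hUrank, hNrank, hMrank] at hle
  omega
end P4

/-- Index formula for symmetric bilinear forms: if `B` is a symmetric bilinear form on a
finite-dimensional real vector space `V`, `W ⊆ V` a subspace and `W^⊥` its `B`-orthogonal,
then `ind(B) + dim(ker B ∩ W) = ind(B|_{W×W}) + ind(B|_{W^⊥×W^⊥}) + dim(W ∩ W^⊥)`. -/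
theorem bilin_index_formula {V : Type*} [AddCommGroup V] [Module ℝ V]
    [FiniteDimensional ℝ V] (B : V →ₗ[ℝ] V →ₗ[ℝ] ℝ) (hB : ∀ v w, B v w = B w v)
    (W : Submodule ℝ V) :
    bilinIndex B + Module.finrank ℝ ↥(LinearMap.ker B ⊓ W) =
      bilinIndex (LinearMap.domRestrict₁₂ B W W) +
        bilinIndex (LinearMap.domRestrict₁₂ B (bilinOrthogonal B W) (bilinOrthogonal B W)) +
        Module.finrank ℝ ↥(W ⊓ bilinOrthogonal B W) := by
  have hBneg : ∀ v w : V, (-B) v w = (-B) w v := by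
    intro v w
    simp [hB v w]
  have horthneg : bilinOrthogonal (-B) W = bilinOrthogonal B W := by
    ext v
    constructor
    · intro h w hw
      have := h w hw
      simpa [neg_eq_zero] using this
    · intro h w hw
      have := h w hw
      simp only [LinearMap.neg_apply]
      simp [this]
  have hkerneg : LinearMap.ker (-B) = LinearMap.ker B := by
    ext v
    simp [LinearMap.mem_ker, neg_eq_zero]
  have hresW : LinearMap.domRestrict₁₂ (-B) W W = -(LinearMap.domRestrict₁₂ B W W) := by
    ext x y
    simp [LinearMap.domRestrict₁₂_apply]
  have hresP : LinearMap.domRestrict₁₂ (-B) (bilinOrthogonal B W) (bilinOrthogonal B W) =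
      -(LinearMap.domRestrict₁₂ B (bilinOrthogonal B W) (bilinOrthogonal B W)) := by
    ext x y
    simp [LinearMap.domRestrict₁₂_apply]
  -- Sylvester identities
  have hS := sylvester B hB
  have hSW := sylvester (LinearMap.domRestrict₁₂ B W W) (fun x y => hB x y)
  have hSP := sylvester
    (LinearMap.domRestrict₁₂ B (bilinOrthogonal B W) (bilinOrthogonal B W))
    (fun x y => hB x y)
  -- kernels of the restricted forms
  have hkW := finrank_ker_domRestrict₁₂ B W
  have hkP := finrank_ker_domRestrict₁₂ B (bilinOrthogonal B W)
  -- dimension of the orthogonal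
  have hE1 := orth_dim B hB W
  have hcomm : Module.finrank ℝ ↥(W ⊓ LinearMap.ker B) =
      Module.finrank ℝ ↥(LinearMap.ker B ⊓ W) := by rw [inf_comm]
  -- the two inequalities
  have hGE1 := ge_ineq B hB W
  have hGE2 := ge_ineq (-B) hBneg W
  rw [horthneg, hkerneg, hresW, hresP] at hGE2
  -- bound on the kernel of the restriction to the orthogonal
  have hker_le_sup : LinearMap.ker B ≤ W ⊔ bilinOrthogonal B W :=
    le_trans (ker_le_bilinOrthogonal B W) le_sup_right
  have hE2 := orth_dim B hB (W ⊔ bilinOrthogonal B W)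
  rw [inf_eq_right.mpr hker_le_sup] at hE2
  have hsupinf := Submodule.finrank_sup_add_finrank_inf_eq W (bilinOrthogonal B W)
  have hD'le : (bilinOrthogonal B W) ⊓ bilinOrthogonal B (bilinOrthogonal B W) ≤
      bilinOrthogonal B (W ⊔ bilinOrthogonal B W) := by
    rintro v ⟨hv1, hv2⟩ w hw
    rw [Submodule.mem_sup] at hw
    obtain ⟨a, ha, b, hb, rfl⟩ := hw
    rw [map_add, hv1 a ha, hv2 b hb, add_zero]
  have hmono : Module.finrank ℝ
        ↥(bilinOrthogonal B W ⊓ bilinOrthogonal B (bilinOrthogonal B W)) ≤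
      Module.finrank ℝ ↥(bilinOrthogonal B (W ⊔ bilinOrthogonal B W)) :=
    Submodule.finrank_mono hD'le
  omega
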